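/- arXiv:1511.08191 — 2 statements merged into one kernel-verified Lean document; each statement's English description precedes it below -/
import Mathlib

section
/- Let X and Y be complete separable metric spaces, f : Y → X continuous, μ a locally finite Borel measure with compact support on Y, and A ⊂ Y with μ(A) > 0. Then for μ-almost every y ∈ A, the upper local dimension of fμ at f(y) equals the upper local dimension of f(μ|_A) at f(y). -/
open MeasureTheory Filter Metric Set Topology
open scoped ENNReal

/-- The lower local dimension of a measure at a point. -/
noncomputable def lowerLocalDim {X : Type*} [MetricSpace X] [MeasurableSpace X]
    (μ : Measure X) (x : X) : ℝ :=
  liminf (fun r : ℝ => Real.log (μ (closedBall x r)).toReal / Real.log r) (𝓝[>] 0)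

/-- The upper local dimension of a measure at a point. -/
noncomputable def upperLocalDim {X : Type*} [MetricSpace X] [MeasurableSpace X]
    (μ : Measure X) (x : X) : ℝ :=
  limsup (fun r : ℝ => Real.log (μ (closedBall x r)).toReal / Real.log r) (𝓝[>] 0)

/-- The `s`-potential of `μ` at `x`. -/
noncomputable def potential {X : Type*} [MetricSpace X] [MeasurableSpace X]
    (μ : Measure X) (s : ℝ) (x : X) : ℝ≥0∞ :=
  ∫⁻ y, edist x y ^ (-s) ∂μ

/-- The `s`-energy of `μ`. -/
noncomputable def energy {X : Type*} [MetricSpace X] [MeasurableSpace X]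
    (μ : Measure X) (s : ℝ) : ℝ≥0∞ :=
  ∫⁻ x, ∫⁻ y, edist x y ^ (-s) ∂μ ∂μ

/-- The correlation dimension of `μ`: `sup { s : I_s(μ) < ∞ }`. -/
noncomputable def corrDim {X : Type*} [MetricSpace X] [MeasurableSpace X]
    (μ : Measure X) : ℝ :=
  sSup {s : ℝ | energy μ s < ⊤}

/-- The lower Hausdorff dimension of `μ`: the `μ`-essential infimum of the
lower local dimension. -/
noncomputable def lowerHausdorffDim {X : Type*} [MetricSpace X] [MeasurableSpace X]
    (μ : Measure X) : ℝ :=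
  essInf (fun x => lowerLocalDim μ x) μ

section Auxiliary

variable {X : Type*} [MetricSpace X] [SecondCountableTopology X] [MeasurableSpace X] [BorelSpace X]

lemma div_neg_flip {a b c : ℝ} (h : a ≤ b) (hc : c < 0) : b / c ≤ a / c := by
  rw [div_eq_mul_inv, div_eq_mul_inv]
  exact mul_le_mul_of_nonpos_right h (inv_nonpos.2 hc.le)


lemma meas_cb (ρ : Measure X) [SFinite ρ] (t : ℝ) :
    Measurable fun x => ρ (closedBall x t) := by
  have hS : MeasurableSet {p : X × X | dist p.2 p.1 ≤ t} :=
    (isClosed_le (by fun_prop) continuous_const).measurableSet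
  have h := measurable_measure_prodMk_left (ν := ρ) hS
  have he : (fun x => ρ (closedBall x t))
      = fun x => ρ (Prod.mk x ⁻¹' {p : X × X | dist p.2 p.1 ≤ t}) := by
    rfl
  rw [he]; exact h


lemma ae_cb_pos (ρ : Measure X) : ∀ᵐ x ∂ρ, ∀ r, 0 < r → 0 < ρ (closedBall x r) := by
  obtain ⟨B, hBc, -, hBbasis⟩ := TopologicalSpace.exists_countable_basis X
  set U := ⋃₀ {b ∈ B | ρ b = 0} with hU
  have hUnull : ρ U = 0 := by
    apply (measure_sUnion_null_iff (hBc.mono (Set.sep_subset _ _))).mpr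
    intro b hb; exact hb.2
  rw [ae_iff]
  apply measure_mono_null _ hUnull
  intro x hx
  simp only [Set.mem_setOf_eq] at hx
  push_neg at hx
  obtain ⟨r, hr, hrnull⟩ := hx
  have hballnull : ρ (ball x r) = 0 :=
    measure_mono_null ball_subset_closedBall (le_antisymm (le_of_not_gt (by
      intro h; exact absurd hrnull (by simpa using h.ne'))) zero_le) -- messy; fix below
  obtain ⟨b, hbB, hxb, hbsub⟩ := hBbasis.exists_subset_of_mem_open (mem_ball_self hr) isOpen_ball
  exact ⟨b, ⟨hbB, measure_mono_null hbsub hballnull⟩, hxb⟩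

lemma cheby (ρ ν : Measure X) [IsFiniteMeasure ν] [IsFiniteMeasure ρ]
    (r : ℝ) (c : ℝ≥0∞) (hc0 : c ≠ 0) (hctop : c ≠ ⊤) :
    ρ {x | ρ (closedBall x (2*r)) < c * ν (closedBall x r)} ≤ c * ν Set.univ := by
  set E := {x | ρ (closedBall x (2*r)) < c * ν (closedBall x r)} with hE
  have hEmeas : MeasurableSet E := by
    apply measurableSet_lt (meas_cb ρ (2*r))
    exact (meas_cb ν r).const_mul c
  set F : X → ℝ≥0∞ := fun x => (ρ (closedBall x (2*r)))⁻¹ * ν (closedBall x r) with hF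
  -- Claim 1 : ∫⁻ F ∂ρ ≤ ν univ
  have claim1 : ∫⁻ x, F x ∂ρ ≤ ν Set.univ := by
    set S : Set (X × X) := {p : X × X | dist p.1 p.2 ≤ r} with hS
    have hSmeas : MeasurableSet S := (isClosed_le (by fun_prop) continuous_const).measurableSet
    set G : X × X → ℝ≥0∞ := fun p => (ρ (closedBall p.1 (2*r)))⁻¹ * S.indicator (fun _ => 1) p
      with hG
    have hGmeas : Measurable G :=
      (((meas_cb ρ (2*r)).comp measurable_fst).inv).mul
        (measurable_const.indicator hSmeas)
    have h1 : ∀ x, F x = ∫⁻ y, G (x, y) ∂ν := by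
      intro x
      rw [hF, hG]
      simp only
      rw [lintegral_const_mul _ (by exact measurable_const.indicator (by
        exact measurableSet_le (by fun_prop) measurable_const) |>.comp (by fun_prop))]
      · congr 1
        have : (fun y => S.indicator (fun _ => (1:ℝ≥0∞)) (x, y))
            = (closedBall x r).indicator (fun _ => 1) := by
          funext y
          by_cases h : dist x y ≤ r
          · rw [Set.indicator_of_mem (by exact h), Set.indicator_of_mem (by
              simpa [Metric.mem_closedBall, dist_comm] using h)]
          · rw [Set.indicator_of_notMem (by exact h), Set.indicator_of_notMem (by
              simpa [Metric.mem_closedBall, dist_comm] using h)]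
        rw [this, lintegral_indicator measurableSet_closedBall _]
        simp
    have h2 : ∫⁻ x, F x ∂ρ = ∫⁻ x, ∫⁻ y, G (x, y) ∂ν ∂ρ := by
      simp only [h1]
    rw [h2]
    rw [lintegral_lintegral_swap (hGmeas.aemeasurable)]
    have h3 : ∀ y, ∫⁻ x, G (x, y) ∂ρ ≤ 1 := by
      intro y
      have : (fun x => G (x, y))
          = (closedBall y r).indicator (fun x => (ρ (closedBall x (2*r)))⁻¹) := by
        funext x
        by_cases h : dist x y ≤ r
        · rw [hG]; simp only
          rw [Set.indicator_of_mem (by exact h),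
            Set.indicator_of_mem (by simpa [Metric.mem_closedBall] using h)]
          simp
        · rw [hG]; simp only
          rw [Set.indicator_of_notMem (by exact h),
            Set.indicator_of_notMem (by simpa [Metric.mem_closedBall] using h)]
          simp
      rw [this, lintegral_indicator measurableSet_closedBall _]
      calc ∫⁻ x in closedBall y r, (ρ (closedBall x (2*r)))⁻¹ ∂ρ
          ≤ ∫⁻ _x in closedBall y r, (ρ (closedBall y r))⁻¹ ∂ρ := by
            apply setLIntegral_mono' measurableSet_closedBall
            intro x hx
            apply ENNReal.inv_le_inv.mpr
            apply measure_mono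
            intro z hz
            simp only [Metric.mem_closedBall] at *
            calc dist z x ≤ dist z y + dist y x := dist_triangle z y x
            _ ≤ r + r := add_le_add hz (by rwa [dist_comm] at hx)
            _ = 2*r := by ring
        _ = (ρ (closedBall y r))⁻¹ * ρ (closedBall y r) := by
            rw [setLIntegral_const]
        _ ≤ 1 := ENNReal.inv_mul_le_one _
    calc ∫⁻ y, ∫⁻ x, G (x, y) ∂ρ ∂ν ≤ ∫⁻ _y, 1 ∂ν := lintegral_mono h3
      _ = ν Set.univ := by simp
  -- Claim 2 : on E, c⁻¹ ≤ F
  have claim2 : ∀ x ∈ E, c⁻¹ ≤ F x := by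
    intro x hx
    rw [hE, Set.mem_setOf_eq] at hx
    have hν0 : ν (closedBall x r) ≠ 0 := by
      intro h0
      rw [h0, mul_zero] at hx
      exact absurd hx (by simp)
    have hνtop : ν (closedBall x r) ≠ ⊤ := measure_ne_top ν _
    have hinv : (ρ (closedBall x (2*r)))⁻¹ ≥ (c * ν (closedBall x r))⁻¹ :=
      ENNReal.inv_le_inv.mpr hx.le
    calc c⁻¹ = (c * ν (closedBall x r))⁻¹ * ν (closedBall x r) := by
          rw [ENNReal.mul_inv (Or.inl hc0) (Or.inl hctop), mul_assoc,
            ENNReal.inv_mul_cancel hν0 hνtop, mul_one]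
      _ ≤ F x := mul_le_mul_left hinv _
  -- Markov
  have markov : c⁻¹ * ρ E ≤ ν Set.univ := by
    calc c⁻¹ * ρ E = ∫⁻ _x in E, c⁻¹ ∂ρ := by rw [setLIntegral_const, mul_comm]
      _ ≤ ∫⁻ x in E, F x ∂ρ := setLIntegral_mono' hEmeas claim2
      _ ≤ ∫⁻ x, F x ∂ρ := setLIntegral_le_lintegral _ _
      _ ≤ ν Set.univ := claim1
  calc ρ E = c * (c⁻¹ * ρ E) := by
        rw [← mul_assoc, ENNReal.mul_inv_cancel hc0 hctop, one_mul]
    _ ≤ c * ν Set.univ := mul_le_mul_right markov _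

lemma aux_eq (ρ ν : Measure X) [IsFiniteMeasure ν] (hle : ρ ≤ ν) :
    ∀ᵐ x ∂ρ, upperLocalDim ν x = upperLocalDim ρ x := by
  have hρfin : IsFiniteMeasure ρ := ⟨(hle Set.univ).trans_lt (measure_lt_top ν _)⟩
  set E : ℕ → ℕ → Set X := fun m k =>
    {x | ρ (closedBall x (2 * (1/2:ℝ)^k)) <
      ENNReal.ofReal (((1/2:ℝ)^k) ^ (1/(m+1):ℝ)) * ν (closedBall x ((1/2:ℝ)^k))} with hEdef
  have hsum : ∀ m : ℕ, (∑' k : ℕ, ρ (E m k)) ≠ ⊤ := by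
    intro m
    set q : ℝ := (1/2:ℝ) ^ (1/(m+1):ℝ) with hq
    have hq0 : 0 ≤ q := Real.rpow_nonneg (by norm_num) _
    have hq1 : q < 1 := Real.rpow_lt_one (by norm_num) (by norm_num) (by positivity)
    have hbound : ∀ k, ρ (E m k) ≤ ENNReal.ofReal (q^k) * ν Set.univ := by
      intro k
      have hpow : ((1/2:ℝ)^k) ^ (1/(m+1):ℝ) = q ^ k := by
        rw [← Real.rpow_natCast (1/2 : ℝ) k, ← Real.rpow_mul (by norm_num), mul_comm,
          Real.rpow_mul (by norm_num), Real.rpow_natCast]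
      have h := cheby ρ ν ((1/2:ℝ)^k) (ENNReal.ofReal (((1/2:ℝ)^k) ^ (1/(m+1):ℝ)))
        (by positivity) ENNReal.ofReal_ne_top
      rw [hpow] at h
      rw [hEdef]
      simp only
      rw [hpow]
      exact h
    have hb2 : (∑' k : ℕ, ρ (E m k)) ≤ (∑' k : ℕ, ENNReal.ofReal (q^k)) * ν Set.univ := by
      rw [← ENNReal.tsum_mul_right]
      exact ENNReal.tsum_le_tsum hbound
    apply ne_top_of_le_ne_top _ hb2
    apply ENNReal.mul_ne_top _ (measure_ne_top ν _)
    rw [← ENNReal.ofReal_tsum_of_nonneg (fun k => pow_nonneg hq0 k)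
      (summable_geometric_of_lt_one hq0 hq1)]
    exact ENNReal.ofReal_ne_top
  have hBC : ∀ᵐ x ∂ρ, ∀ m : ℕ, ∀ᶠ k in atTop, x ∉ E m k := by
    rw [ae_all_iff]
    exact fun m => ae_eventually_notMem (hsum m)
  filter_upwards [hBC, ae_cb_pos ρ] with x hx hpos
  set gν : ℝ → ℝ := fun r => Real.log (ν (closedBall x r)).toReal / Real.log r with hgν
  set gρ : ℝ → ℝ := fun r => Real.log (ρ (closedBall x r)).toReal / Real.log r with hgρ
  set Sν : Set ℝ := {a | ∀ᶠ r in 𝓝[>] (0:ℝ), gν r ≤ a} with hSν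
  set Sρ : Set ℝ := {a | ∀ᶠ r in 𝓝[>] (0:ℝ), gρ r ≤ a} with hSρ
  have hposν : ∀ r, 0 < r → 0 < ν (closedBall x r) := fun r hr => (hpos r hr).trans_le (hle _)
  have hPpos : ∀ r, 0 < r → 0 < (ρ (closedBall x r)).toReal := fun r hr =>
    ENNReal.toReal_pos (hpos r hr).ne' (measure_ne_top _ _)
  have hQpos : ∀ r, 0 < r → 0 < (ν (closedBall x r)).toReal := fun r hr =>
    ENNReal.toReal_pos (hposν r hr).ne' (measure_ne_top _ _)
  have htriv : ∀ r, 0 < r → r < 1 → gν r ≤ gρ r := by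
    intro r h0 h1
    have hlogr : Real.log r < 0 := Real.log_neg h0 h1
    apply div_neg_flip _ hlogr
    apply Real.log_le_log (hPpos r h0)
    exact ENNReal.toReal_mono (measure_ne_top _ _) (hle _)
  have hsub : Sρ ⊆ Sν := by
    intro a ha
    have h1 : Ioo (0:ℝ) 1 ∈ 𝓝[>] (0:ℝ) := Ioo_mem_nhdsGT_of_mem ⟨le_refl 0, one_pos⟩
    filter_upwards [ha, h1] with r har hr
    exact le_trans (htriv r hr.1 hr.2) har
  set L : ℝ := Real.log (ν Set.univ).toReal with hLdef
  have hlower : ∀ (μ' : Measure X), μ' ≤ ν →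
      (∀ r, 0 < r → 0 < (μ' (closedBall x r)).toReal) → ∀ a : ℝ,
      (∀ᶠ r in 𝓝[>] (0:ℝ), Real.log (μ' (closedBall x r)).toReal / Real.log r ≤ a) →
      -(|L|+1) ≤ a := by
    intro μ' hμ' hpos' a ha
    have h1 : ∀ᶠ r in 𝓝[>] (0:ℝ),
        -(|L|+1) ≤ Real.log (μ' (closedBall x r)).toReal / Real.log r := by
      have hmem : Ioo (0:ℝ) (Real.exp (-1)) ∈ 𝓝[>] (0:ℝ) :=
        Ioo_mem_nhdsGT_of_mem ⟨le_refl 0, Real.exp_pos _⟩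
      filter_upwards [hmem] with r hr
      have hlogr : Real.log r < -1 := by
        have h := Real.log_lt_log hr.1 hr.2
        rwa [Real.log_exp] at h
      have hlog_le : Real.log (μ' (closedBall x r)).toReal ≤ L := by
        apply Real.log_le_log (hpos' r hr.1)
        exact ENNReal.toReal_mono (measure_ne_top ν _)
          (le_trans (hμ' _) (measure_mono (Set.subset_univ _)))
      have h2 : L / Real.log r ≤ Real.log (μ' (closedBall x r)).toReal / Real.log r :=
        div_neg_flip hlog_le (by linarith)
      have habs : |L / Real.log r| ≤ |L| := by
        rw [abs_div]
        apply div_le_self (abs_nonneg _)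
        rw [abs_of_neg (by linarith : Real.log r < 0)]
        linarith
      have h3 := neg_abs_le (L / Real.log r)
      linarith
    obtain ⟨r, hra, hrb⟩ := (ha.and h1).exists
    linarith
  have hbddν : ∀ a ∈ Sν, -(|L|+1) ≤ a := fun a ha =>
    hlower ν le_rfl hQpos a ha
  have hbddρ : ∀ a ∈ Sρ, -(|L|+1) ≤ a := fun a ha =>
    hlower ρ hle hPpos a ha
  -- main estimate
  have hest : ∀ a ∈ Sν, ∀ m : ℕ, a + 3 * (1/(m+1:ℝ)) ∈ Sρ := by
    intro a ha m
    set ε : ℝ := 1/(m+1:ℝ) with hεdef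
    have hε0 : 0 < ε := by positivity
    obtain ⟨k₀, hk₀⟩ := eventually_atTop.mp (hx m)
    obtain ⟨r₁, hr₁mem, hr₁sub⟩ := mem_nhdsGT_iff_exists_Ioo_subset.mp ha
    rw [Set.mem_Ioi] at hr₁mem
    set δ : ℝ := min (min (1/4) r₁)
      (min ((1/2:ℝ)^(k₀+1)) (Real.exp (-((|a|+1) * Real.log 4 / ε)))) with hδdef
    have hδ0 : 0 < δ := by positivity
    have hmem : Ioo (0:ℝ) δ ∈ 𝓝[>] (0:ℝ) := Ioo_mem_nhdsGT_of_mem ⟨le_refl 0, hδ0⟩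
    rw [hSρ]
    filter_upwards [hmem] with r hr
    obtain ⟨hr0, hrδ⟩ := hr
    have hr14 : r ≤ 1/4 := le_trans hrδ.le (le_trans (min_le_left _ _) (min_le_left _ _))
    have hrr₁ : r < r₁ := lt_of_lt_of_le hrδ (le_trans (min_le_left _ _) (min_le_right _ _))
    have hrk₀ : r < (1/2:ℝ)^(k₀+1) :=
      lt_of_lt_of_le hrδ (le_trans (min_le_right _ _) (min_le_left _ _))
    have hrexp : r ≤ Real.exp (-((|a|+1) * Real.log 4 / ε)) :=
      le_trans hrδ.le (le_trans (min_le_right _ _) (min_le_right _ _))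
    have hr1 : r < 1 := lt_of_le_of_lt hr14 (by norm_num)
    have hlogr : Real.log r < 0 := Real.log_neg hr0 hr1
    have hlog4 : (0:ℝ) < Real.log 4 := Real.log_pos (by norm_num)
    have hlogr4 : Real.log 4 ≤ -Real.log r := by
      have h := Real.log_le_log hr0 hr14
      rw [show (1/4:ℝ) = 4⁻¹ by norm_num, Real.log_inv] at h
      linarith
    have hlogrexp : (|a|+1) * Real.log 4 / ε ≤ -Real.log r := by
      have h := Real.log_le_log hr0 hrexp
      rw [Real.log_exp] at h
      linarith
    -- choose k
    set t : ℝ := Real.logb 2 r with htdef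
    set k : ℕ := ⌈1 - t⌉₊ with hkdef
    have ht0 : t < 0 := Real.logb_neg (by norm_num) hr0 hr1
    have hk1 : 1 - t ≤ (k:ℝ) := Nat.le_ceil _
    have hk2 : (k:ℝ) < 2 - t := by
      have h := Nat.ceil_lt_add_one (by linarith : (0:ℝ) ≤ 1 - t)
      linarith
    set s : ℝ := (1/2:ℝ)^k with hsdef
    have hs_pos : 0 < s := by positivity
    have hs_eq : s = (2:ℝ) ^ (-(k:ℝ)) := by
      rw [hsdef, Real.rpow_neg (by norm_num), Real.rpow_natCast, one_div, inv_pow]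
    have hr_eq : r = (2:ℝ) ^ t := (Real.rpow_logb (by norm_num) (by norm_num) hr0).symm
    have hs_le : s ≤ r/2 := by
      rw [hs_eq, hr_eq, show (2:ℝ)^t / 2 = 2 ^ (t - 1) by
        rw [Real.rpow_sub (by norm_num), Real.rpow_one]]
      exact (Real.rpow_le_rpow_left_iff (by norm_num : (1:ℝ) < 2)).mpr (by linarith)
    have hs_gt : r/4 < s := by
      rw [hs_eq, hr_eq, show (2:ℝ)^t / 4 = 2 ^ (t - 2) by
        rw [Real.rpow_sub (by norm_num)]; norm_num]
      exact (Real.rpow_lt_rpow_left_iff (by norm_num : (1:ℝ) < 2)).mpr (by linarith)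
    have hkk₀ : k₀ ≤ k := by
      have h1 : s < (1/2:ℝ)^(k₀+1) := lt_of_le_of_lt hs_le (by linarith)
      have h2 : k₀ + 1 < k := by
        rw [hsdef] at h1
        exact (pow_lt_pow_iff_right_of_lt_one₀ (by norm_num) (by norm_num)).mp h1
      omega
    have hBCk := hk₀ k hkk₀
    simp only [hEdef, Set.mem_setOf_eq, not_lt] at hBCk
    have hchain : ENNReal.ofReal (s ^ ε) * ν (closedBall x (r/4)) ≤ ρ (closedBall x r) := by
      calc ENNReal.ofReal (s ^ ε) * ν (closedBall x (r/4))
          ≤ ENNReal.ofReal (s ^ ε) * ν (closedBall x s) :=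
            mul_le_mul_right (measure_mono (closedBall_subset_closedBall hs_gt.le)) _
        _ ≤ ρ (closedBall x (2*s)) := hBCk
        _ ≤ ρ (closedBall x r) := measure_mono (closedBall_subset_closedBall (by linarith))
    have hsε : 0 < s ^ ε := Real.rpow_pos_of_pos hs_pos _
    have hreal : s ^ ε * (ν (closedBall x (r/4))).toReal ≤ (ρ (closedBall x r)).toReal := by
      have h := ENNReal.toReal_mono (measure_ne_top _ _) hchain
      rwa [ENNReal.toReal_mul, ENNReal.toReal_ofReal hsε.le] at h
    set Q : ℝ := (ν (closedBall x (r/4))).toReal with hQdef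
    set P : ℝ := (ρ (closedBall x r)).toReal with hPdef
    have hQ0 : 0 < Q := hQpos _ (by positivity)
    have hP0 : 0 < P := hPpos _ hr0
    have hlogP : ε * Real.log s + Real.log Q ≤ Real.log P := by
      have h := Real.log_le_log (by positivity) hreal
      rwa [Real.log_mul (ne_of_gt hsε) (ne_of_gt hQ0), Real.log_rpow hs_pos] at h
    have hgr : gρ r ≤ ε * (Real.log s / Real.log r) + Real.log Q / Real.log r := by
      have h := div_neg_flip hlogP hlogr
      rw [add_div, mul_div_assoc] at h
      exact h
    have hlogs_ge : Real.log r - Real.log 4 ≤ Real.log s := by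
      have h := Real.log_le_log (by positivity : (0:ℝ) < r/4) hs_gt.le
      rwa [Real.log_div (ne_of_gt hr0) (by norm_num)] at h
    have hb1 : Real.log s / Real.log r ≤ 2 := by
      have h1 : Real.log s / Real.log r ≤ (Real.log r - Real.log 4)/Real.log r :=
        div_neg_flip hlogs_ge hlogr
      have hlogrne : Real.log r ≠ 0 := ne_of_lt hlogr
      have h2 : (Real.log r - Real.log 4)/Real.log r = 1 + Real.log 4 / (-Real.log r) := by
        rw [sub_div, div_self hlogrne, div_neg, sub_eq_add_neg]
      have h3 : Real.log 4 / (-Real.log r) ≤ 1 := by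
        rw [div_le_one (by linarith)]
        linarith
      rw [h2] at h1
      linarith
    have hgν4 : Real.log Q / Real.log (r/4) ≤ a :=
      hr₁sub ⟨by positivity, by linarith⟩
    have hlogr4' : Real.log (r/4) < 0 := by
      rw [Real.log_div (ne_of_gt hr0) (by norm_num)]
      linarith
    have hQge : a * Real.log (r/4) ≤ Real.log Q := by
      have h := (div_le_iff_of_neg hlogr4').mp hgν4
      linarith
    have hb2 : Real.log Q / Real.log r ≤ a + ε := by
      rw [div_le_iff_of_neg hlogr]
      have e1 : ε * ((|a|+1)*Real.log 4/ε) = (|a|+1)*Real.log 4 := by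
        field_simp
      have hkey : (|a|+1) * Real.log 4 ≤ ε * (-Real.log r) := by
        have h := mul_le_mul_of_nonneg_left hlogrexp hε0.le
        linarith
      have h4 : Real.log (r/4) = Real.log r - Real.log 4 := by
        rw [Real.log_div (ne_of_gt hr0) (by norm_num)]
      rw [h4] at hQge
      have h5 : a * Real.log 4 ≤ (|a|+1) * Real.log 4 :=
        mul_le_mul_of_nonneg_right (by linarith [le_abs_self a]) hlog4.le
      have h6 : a * (Real.log r - Real.log 4) = a * Real.log r - a * Real.log 4 := by ring
      rw [h6] at hQge
      have h7 : ε * (-Real.log r) = -(ε * Real.log r) := by ring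
      rw [h7] at hkey
      have h8 : (a + ε) * Real.log r = a * Real.log r + ε * Real.log r := by ring
      rw [h8]
      linarith
    calc gρ r ≤ ε * (Real.log s / Real.log r) + Real.log Q / Real.log r := hgr
      _ ≤ ε * 2 + (a + ε) := add_le_add (mul_le_mul_of_nonneg_left hb1 hε0.le) hb2
      _ = a + 3 * ε := by ring
  -- assemble
  show upperLocalDim ν x = upperLocalDim ρ x
  rw [upperLocalDim, upperLocalDim, limsup_eq, limsup_eq]
  have hgoalν : {a : ℝ | ∀ᶠ (n : ℝ) in 𝓝[>] 0,
      Real.log (ν (closedBall x n)).toReal / Real.log n ≤ a} = Sν := rfl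
  have hgoalρ : {a : ℝ | ∀ᶠ (n : ℝ) in 𝓝[>] 0,
      Real.log (ρ (closedBall x n)).toReal / Real.log n ≤ a} = Sρ := rfl
  rw [hgoalν, hgoalρ]
  rcases Set.eq_empty_or_nonempty Sν with hSνe | hSνne
  · have hSρe : Sρ = ∅ := Set.eq_empty_of_subset_empty (hSνe ▸ hsub)
    rw [hSνe, hSρe]
  · obtain ⟨a, ha⟩ := hSνne
    have hSρne : Sρ.Nonempty := ⟨a + 3 * (1/((0:ℕ)+1:ℝ)), hest a ha 0⟩
    apply le_antisymm
    · exact csInf_le_csInf ⟨-(|L|+1), hbddν⟩ hSρne hsub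
    · apply le_csInf ⟨a, ha⟩
      intro b hb
      apply le_of_forall_gt_imp_ge_of_dense
      intro c hc
      obtain ⟨m, hm⟩ := exists_nat_gt (3/(c - b))
      have hm1 : 3/(c-b) < (m:ℝ)+1 := by linarith [hm]
      have h3 : 3 * (1/((m:ℕ)+1:ℝ)) < c - b := by
        rw [div_lt_iff₀ (by linarith : (0:ℝ) < c - b)] at hm1
        rw [mul_one_div, div_lt_iff₀ (by positivity : (0:ℝ) < (m:ℝ)+1)]
        nlinarith
      calc sInf Sρ ≤ b + 3 * (1/((m:ℕ)+1:ℝ)) := csInf_le ⟨-(|L|+1), hbddρ⟩ (hest b hb m)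
        _ ≤ c := by linarith

end Auxiliary

theorem upperLocalDim_map_restrict {X Y : Type*}
    [MetricSpace X] [CompleteSpace X] [SecondCountableTopology X]
    [MeasurableSpace X] [BorelSpace X]
    [MetricSpace Y] [CompleteSpace Y] [SecondCountableTopology Y]
    [MeasurableSpace Y] [BorelSpace Y]
    (f : Y → X) (hf : Continuous f)
    (μ : Measure Y) [IsLocallyFiniteMeasure μ]
    (K : Set Y) (hK : IsCompact K) (hKfull : μ Kᶜ = 0)
    (A : Set Y) (hA : 0 < μ A) :
    ∀ᵐ y ∂μ.restrict A,
      upperLocalDim (μ.map f) (f y) = upperLocalDim ((μ.restrict A).map f) (f y) := by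
  have hμfin : IsFiniteMeasure μ := by
    constructor
    have h1 : μ Set.univ ≤ μ K + μ Kᶜ := by
      rw [← Set.union_compl_self K]
      exact measure_union_le _ _
    rw [hKfull, add_zero] at h1
    exact h1.trans_lt hK.measure_lt_top
  have hν : IsFiniteMeasure (μ.map f) := by
    constructor
    rw [Measure.map_apply hf.measurable MeasurableSet.univ, Set.preimage_univ]
    exact measure_lt_top μ _
  have hle : (μ.restrict A).map f ≤ μ.map f :=
    Measure.map_mono Measure.restrict_le_self hf.measurable
  have h := aux_eq ((μ.restrict A).map f) (μ.map f) hle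
  exact ae_of_ae_map hf.measurable.aemeasurable h
end

section
/- Let μ be a locally finite Borel regular measure on a complete separable metric space X and A ⊂ X with μ(A) > 0. Then for μ-almost every x ∈ A, the lower local dimension of μ at x equals the lower local dimension of μ|_A at x, and the upper local dimension of μ at x equals the upper local dimension of μ|_A at x. -/
open MeasureTheory Filter Metric Set Topology
open scoped ENNReal

lemma aux_tendsto_div5 : Tendsto (fun s : ℝ => s / 5) (𝓝[>] (0:ℝ)) (𝓝[>] (0:ℝ)) := by
  apply tendsto_nhdsWithin_of_tendsto_nhds_of_eventually_within
  · have h : Tendsto (fun s : ℝ => s / 5) (𝓝 (0:ℝ)) (𝓝 ((0:ℝ)/5)) :=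
      (tendsto_id (α := ℝ)).div_const 5
    simpa using h.mono_left nhdsWithin_le_nhds
  · filter_upwards [self_mem_nhdsWithin] with s hs
    exact div_pos (show (0:ℝ) < s from hs) (by norm_num)

lemma aux_tendsto_mul5 : Tendsto (fun s : ℝ => 5 * s) (𝓝[>] (0:ℝ)) (𝓝[>] (0:ℝ)) := by
  apply tendsto_nhdsWithin_of_tendsto_nhds_of_eventually_within
  · have h : Tendsto (fun s : ℝ => 5 * s) (𝓝 (0:ℝ)) (𝓝 (5 * (0:ℝ))) :=
      (tendsto_id (α := ℝ)).const_mul 5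
    simpa using h.mono_left nhdsWithin_le_nhds
  · filter_upwards [self_mem_nhdsWithin] with s hs
    exact mul_pos (by norm_num) (show (0:ℝ) < s from hs)

lemma aux_ae_closedBall_pos {X : Type*} [MetricSpace X] [SecondCountableTopology X]
    [MeasurableSpace X] (ν : Measure X) :
    ∀ᵐ x ∂ν, ∀ r : ℝ, 0 < r → 0 < ν (closedBall x r) := by
  obtain ⟨B, hBc, -, hB⟩ := TopologicalSpace.exists_countable_basis X
  rw [ae_iff]
  apply measure_mono_null (t := ⋃₀ {b ∈ B | ν b = 0})
  · intro x hx
    simp only [mem_setOf_eq, not_forall] at hx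
    obtain ⟨r, hr, hxr⟩ := hx
    have hball : ν (ball x r) = 0 :=
      le_antisymm (le_trans (measure_mono ball_subset_closedBall)
        (by simpa using not_lt.1 hxr)) (zero_le)
    obtain ⟨b, hbB, hxb, hbsub⟩ := hB.mem_nhds_iff.1 (ball_mem_nhds x hr)
    exact ⟨b, ⟨hbB, le_antisymm (le_trans (measure_mono hbsub) hball.le) (zero_le)⟩, hxb⟩
  · exact (measure_sUnion_null_iff (hBc.mono (sep_subset _ _))).2 fun b hb => hb.2

lemma aux_bad_null {X : Type*} [MetricSpace X] [SecondCountableTopology X]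
    [MeasurableSpace X] [OpensMeasurableSpace X]
    (μ : Measure X) (A U : Set X) (hU : IsOpen U) (hUfin : μ U ≠ ∞)
    {ε : ℝ} (hε : 0 < ε) :
    μ.restrict A {x | x ∈ U ∧ ∃ᶠ r in 𝓝[>] (0:ℝ),
      μ (closedBall x (5*r) ∩ A) < ENNReal.ofReal ((5*r) ^ ε) * μ (closedBall x r)} = 0 := by
  set ν := μ.restrict A with hν
  set Bad := {x | x ∈ U ∧ ∃ᶠ r in 𝓝[>] (0:ℝ),
      μ (closedBall x (5*r) ∩ A) < ENNReal.ofReal ((5*r) ^ ε) * μ (closedBall x r)} with hBad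
  -- main estimate
  have est : ∀ δ : ℝ, 0 < δ → ν Bad ≤ ENNReal.ofReal ((5*δ) ^ ε) * μ U := by
    intro δ hδ
    have H : ∀ x ∈ Bad, ∃ r : ℝ, 0 < r ∧ r ≤ δ ∧ closedBall x r ⊆ U ∧
        μ (closedBall x (5*r) ∩ A) < ENNReal.ofReal ((5*r) ^ ε) * μ (closedBall x r) := by
      intro x hx
      obtain ⟨η, hη, hηU⟩ : ∃ η > 0, closedBall x η ⊆ U := by
        obtain ⟨t, ht, htU⟩ := Metric.mem_nhds_iff.1 (hU.mem_nhds hx.1)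
        exact ⟨t/2, by positivity, (closedBall_subset_ball (by linarith)).trans htU⟩
      have hmem : ∀ᶠ r in 𝓝[>] (0:ℝ), r ∈ Ioo 0 (min δ η) :=
        eventually_of_mem (Ioo_mem_nhdsGT (by positivity)) fun _ h => h
      obtain ⟨r, hr1, hr2⟩ := (hx.2.and_eventually hmem).exists
      exact ⟨r, hr2.1, (le_min_iff.1 hr2.2.le).1,
        (closedBall_subset_closedBall (le_min_iff.1 hr2.2.le).2).trans hηU, hr1⟩
    choose! R hR0 hRδ hRU hRbad using H
    obtain ⟨u, hu_sub, hu_disj, hu_cov⟩ :=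
      Vitali.exists_disjoint_subfamily_covering_enlargement_closedBall Bad id R δ
        (fun a ha => hRδ a ha) 5 (by norm_num)
    simp only [id] at hu_disj hu_cov
    have hcnt : u.Countable := by
      exact Set.PairwiseDisjoint.countable_of_isOpen (s := fun a => ball a (R a))
        (hu_disj.mono fun a => ball_subset_closedBall)
        (fun a _ => isOpen_ball)
        (fun a ha => nonempty_ball.2 (hR0 a (hu_sub ha)))
    have hcov : Bad ⊆ ⋃ b ∈ u, closedBall b (5 * R b) := by
      intro a ha
      obtain ⟨b, hb, hsub⟩ := hu_cov a ha
      exact mem_biUnion hb (hsub (mem_closedBall_self (hR0 a ha).le))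
    calc ν Bad ≤ ν (⋃ b ∈ u, closedBall b (5 * R b)) := measure_mono hcov
      _ ≤ ∑' b : u, ν (closedBall b (5 * R b)) := measure_biUnion_le ν hcnt _
      _ = ∑' b : u, μ (closedBall (b:X) (5 * R b) ∩ A) := by
          simp [hν, Measure.restrict_apply measurableSet_closedBall]
      _ ≤ ∑' b : u, ENNReal.ofReal ((5*δ) ^ ε) * μ (closedBall (b:X) (R b)) := by
          apply ENNReal.tsum_le_tsum
          intro b
          refine le_trans (hRbad b (hu_sub b.2)).le ?_
          apply mul_le_mul_left
          apply ENNReal.ofReal_le_ofReal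
          exact Real.rpow_le_rpow (by have := hR0 b (hu_sub b.2); positivity) (by linarith [hRδ b (hu_sub b.2)]) hε.le
      _ = ENNReal.ofReal ((5*δ) ^ ε) * ∑' b : u, μ (closedBall (b:X) (R b)) :=
          ENNReal.tsum_mul_left
      _ = ENNReal.ofReal ((5*δ) ^ ε) * μ (⋃ b ∈ u, closedBall b (R b)) := by
          rw [measure_biUnion hcnt hu_disj fun b _ => measurableSet_closedBall]
      _ ≤ ENNReal.ofReal ((5*δ) ^ ε) * μ U := by
          apply mul_le_mul_right
          apply measure_mono
          exact iUnion₂_subset fun b hb => hRU b (hu_sub hb)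
  -- take δ → 0
  have htend : Tendsto (fun δ : ℝ => ENNReal.ofReal ((5*δ) ^ ε) * μ U) (𝓝[>] (0:ℝ)) (𝓝 0) := by
    have h1 : Tendsto (fun δ : ℝ => (5*δ) ^ ε) (𝓝[>] (0:ℝ)) (𝓝 0) := by
      have hc : ContinuousAt (fun t : ℝ => t ^ ε) 0 :=
        Real.continuousAt_rpow_const 0 ε (Or.inr hε.le)
      have h5 : Tendsto (fun δ : ℝ => 5*δ) (𝓝[>] (0:ℝ)) (𝓝 (0:ℝ)) := by
        have h' : Tendsto (fun δ : ℝ => 5*δ) (𝓝 (0:ℝ)) (𝓝 (5*(0:ℝ))) :=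
          (tendsto_id (α := ℝ)).const_mul 5
        simpa using h'.mono_left nhdsWithin_le_nhds
      have := hc.tendsto.comp h5
      simpa [Function.comp_def, Real.zero_rpow hε.ne'] using this
    have h2 : Tendsto (fun δ : ℝ => ENNReal.ofReal ((5*δ) ^ ε)) (𝓝[>] (0:ℝ)) (𝓝 0) := by
      have := (ENNReal.continuous_ofReal.tendsto 0).comp h1
      simpa [Function.comp_def] using this
    have := ENNReal.Tendsto.mul_const h2 (Or.inr hUfin)
    simpa using this
  have hle : ν Bad ≤ 0 := by
    apply ge_of_tendsto htend
    filter_upwards [self_mem_nhdsWithin] with δ hδ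
    exact est δ hδ
  exact le_antisymm hle (zero_le)

lemma aux_tendsto_c :
    Tendsto (fun s : ℝ => Real.log s / (Real.log s - Real.log 5)) (𝓝[>] (0:ℝ)) (𝓝 1) := by
  set L : ℝ := Real.log 5 with hL
  have hL0 : 0 < L := Real.log_pos (by norm_num)
  have h1 : Tendsto (fun u : ℝ => u / (u - L)) atBot (𝓝 1) := by
    have h2 : Tendsto (fun u : ℝ => L - u) atBot atTop := tendsto_atTop_add_const_left _ L
      (tendsto_neg_atBot_atTop.comp tendsto_id)
    have h3 : Tendsto (fun u : ℝ => L / (L - u)) atBot (𝓝 0) :=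
      Tendsto.div_atTop tendsto_const_nhds h2
    have h4 : Tendsto (fun u : ℝ => 1 - L / (L - u)) atBot (𝓝 (1 - 0)) :=
      tendsto_const_nhds.sub h3
    rw [sub_zero] at h4
    apply h4.congr'
    filter_upwards [eventually_lt_atBot 0] with u hu
    have hne : L - u ≠ 0 := by intro h; rw [sub_eq_zero] at h; linarith
    have hne2 : u - L ≠ 0 := by intro h; rw [sub_eq_zero] at h; linarith
    field_simp
    ring
  exact h1.comp Real.tendsto_log_nhdsGT_zero

lemma aux_analytic {F G : ℝ → ℝ≥0∞}
    (hFG : ∀ r, G r ≤ F r)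
    (hmono : ∀ ⦃r s : ℝ⦄, r ≤ s → F r ≤ F s)
    (hGpos : ∀ r : ℝ, 0 < r → 0 < G r)
    (hFfin : ∀ᶠ r in 𝓝[>] (0:ℝ), F r < ∞)
    (hkey : ∀ ε : ℝ, 0 < ε → ∀ᶠ r in 𝓝[>] (0:ℝ),
      ENNReal.ofReal ((5*r) ^ ε) * F r ≤ G (5*r)) :
    liminf (fun r : ℝ => Real.log (F r).toReal / Real.log r) (𝓝[>] 0)
      = liminf (fun r : ℝ => Real.log (G r).toReal / Real.log r) (𝓝[>] 0) ∧
    limsup (fun r : ℝ => Real.log (F r).toReal / Real.log r) (𝓝[>] 0)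
      = limsup (fun r : ℝ => Real.log (G r).toReal / Real.log r) (𝓝[>] 0) := by
  set l : Filter ℝ := 𝓝[>] (0:ℝ) with hl
  set f : ℝ → ℝ := fun r => Real.log (F r).toReal / Real.log r with hf
  set g : ℝ → ℝ := fun r => Real.log (G r).toReal / Real.log r with hg
  obtain ⟨r₀, hr₀pos, hr₀fin⟩ : ∃ r₀ : ℝ, 0 < r₀ ∧ F r₀ < ∞ := by
    obtain ⟨r, hr1, hr2⟩ := (eventually_mem_nhdsWithin.and hFfin).exists
    exact ⟨r, hr1, hr2⟩
  set M : ℝ := max (F r₀).toReal 1 with hM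
  have hM1 : 1 ≤ M := le_max_right _ _
  -- basic facts in the good range
  have hrange : ∀ r : ℝ, r ∈ Ioo 0 (min r₀ 1) →
      0 < (G r).toReal ∧ (G r).toReal ≤ (F r).toReal ∧ (F r).toReal ≤ M ∧ Real.log r < 0 := by
    intro r hr
    have hr0 : 0 < r := hr.1
    have hrr₀ : r ≤ r₀ := le_of_lt (lt_of_lt_of_le hr.2 (min_le_left _ _))
    have hr1 : r < 1 := lt_of_lt_of_le hr.2 (min_le_right _ _)
    have hFne : F r ≠ ∞ := (lt_of_le_of_lt (hmono hrr₀) hr₀fin).ne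
    have hGne : G r ≠ ∞ := (lt_of_le_of_lt (le_trans (hFG r) (hmono hrr₀)) hr₀fin).ne
    refine ⟨ENNReal.toReal_pos (hGpos r hr0).ne' hGne, ENNReal.toReal_mono hFne (hFG r),
      le_trans (ENNReal.toReal_mono hr₀fin.ne (hmono hrr₀)) (le_max_left _ _),
      Real.log_neg hr0 hr1⟩
  have hEv0 : ∀ᶠ r in l, r ∈ Ioo (0:ℝ) (min r₀ 1) :=
    eventually_of_mem (Ioo_mem_nhdsGT (by positivity)) fun _ h => h
  -- E1 : f ≤ g eventually
  have hE1 : ∀ᶠ r in l, f r ≤ g r := by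
    filter_upwards [hEv0] with r hr
    obtain ⟨h1, h2, h3, h4⟩ := hrange r hr
    exact (div_le_div_right_of_neg h4).2 (Real.log_le_log h1 h2)
  -- E2 : f and g eventually ≥ -1
  have hMtend : Tendsto (fun r : ℝ => Real.log M / Real.log r) l (𝓝 0) := by
    have h2 : Tendsto (fun r : ℝ => -Real.log r) l atTop :=
      tendsto_neg_atBot_atTop.comp Real.tendsto_log_nhdsGT_zero
    have h3 : Tendsto (fun r : ℝ => Real.log M / (-Real.log r)) l (𝓝 0) :=
      Tendsto.div_atTop tendsto_const_nhds h2
    have h4 := h3.neg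
    rw [neg_zero] at h4
    apply h4.congr
    intro r
    rw [div_neg, neg_neg]
  have hE2 : ∀ᶠ r in l, -1 ≤ f r ∧ -1 ≤ g r := by
    filter_upwards [hEv0, hMtend.eventually (eventually_gt_nhds (by norm_num : (-1:ℝ) < 0))]
      with r hr hr2
    obtain ⟨h1, h2, h3, h4⟩ := hrange r hr
    have hgM : Real.log (G r).toReal ≤ Real.log M := Real.log_le_log h1 (by linarith)
    have hfM : Real.log (F r).toReal ≤ Real.log M := Real.log_le_log (by linarith) (by linarith)
    constructor
    · exact le_trans hr2.le ((div_le_div_right_of_neg h4).2 hfM)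
    · exact le_trans hr2.le ((div_le_div_right_of_neg h4).2 hgM)
  -- the quantity c
  set c : ℝ → ℝ := fun s => Real.log s / (Real.log s - Real.log 5) with hc
  have hL0 : 0 < Real.log 5 := Real.log_pos (by norm_num)
  have hEc : ∀ᶠ s in l, 0 < c s ∧ c s ≤ 1 := by
    filter_upwards [hEv0] with s hs
    have hls : Real.log s < 0 := Real.log_neg hs.1 (lt_of_lt_of_le hs.2 (min_le_right _ _))
    have hD : Real.log s - Real.log 5 < 0 := by linarith
    constructor
    · rw [hc]
      simp only
      rw [← neg_div_neg_eq]
      exact div_pos (by linarith) (by linarith)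
    · rw [hc]
      simp only
      rw [div_le_one_of_neg hD]
      linarith
  -- key inequality
  have hKey : ∀ η : ℝ, 0 < η → ∀ᶠ s in l, c s * (g s - η) ≤ f (s/5) := by
    intro η hη
    have hkey' : ∀ᶠ s in l, ENNReal.ofReal (s ^ η) * F (s/5) ≤ G s := by
      filter_upwards [aux_tendsto_div5.eventually (hkey η hη)] with s hs
      rwa [show 5*(s/5) = s by ring] at hs
    filter_upwards [hkey', hEv0, hEc] with s hs hsr hcs
    have hs0 : 0 < s := hsr.1
    have hs5 : s/5 ∈ Ioo (0:ℝ) (min r₀ 1) :=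
      ⟨by positivity, lt_trans (by linarith) hsr.2⟩
    obtain ⟨hG5, hGF5, hF5M, hlog5⟩ := hrange (s/5) hs5
    obtain ⟨hGs, hGFs, hFsM, hlogs⟩ := hrange s hsr
    have hF5pos : 0 < (F (s/5)).toReal := lt_of_lt_of_le hG5 hGF5
    -- pass hs to reals
    have hGne : G s ≠ ∞ := by
      intro h
      rw [h] at hGs
      simp at hGs
    have hreal : s ^ η * (F (s/5)).toReal ≤ (G s).toReal := by
      have := ENNReal.toReal_mono hGne hs
      rwa [ENNReal.toReal_mul, ENNReal.toReal_ofReal (by positivity)] at this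
    have hlog : η * Real.log s + Real.log (F (s/5)).toReal ≤ Real.log (G s).toReal := by
      have h1 : Real.log (s ^ η * (F (s/5)).toReal) ≤ Real.log (G s).toReal :=
        Real.log_le_log (by positivity) hreal
      rwa [Real.log_mul (by positivity) hF5pos.ne', Real.log_rpow hs0] at h1
    -- divide by log s < 0
    have hdiv : g s - η ≤ Real.log (F (s/5)).toReal / Real.log s := by
      have h2 := (div_le_div_right_of_neg hlogs).2 hlog
      rw [add_div, mul_div_assoc, div_self hlogs.ne, mul_one] at h2
      rw [hg]
      simp only
      linarith
    have hlog5eq : Real.log (s/5) = Real.log s - Real.log 5 :=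
      Real.log_div hs0.ne' (by norm_num)
    have hfeq : f (s/5) = (Real.log (F (s/5)).toReal / Real.log s) * c s := by
      have heq : (Real.log (F (s/5)).toReal / Real.log s) *
          (Real.log s / (Real.log s - Real.log 5))
          = Real.log (F (s/5)).toReal / (Real.log s - Real.log 5) := by
        rw [div_mul_div_comm, mul_comm (Real.log (F (s/5)).toReal) (Real.log s),
          mul_div_mul_left _ _ hlogs.ne]
      rw [hf, hc]
      simp only
      rw [hlog5eq, heq]
    rw [hfeq]
    calc c s * (g s - η) ≤ c s * (Real.log (F (s/5)).toReal / Real.log s) :=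
          mul_le_mul_of_nonneg_left hdiv hcs.1.le
      _ = (Real.log (F (s/5)).toReal / Real.log s) * c s := mul_comm _ _
  -- Claim B (liminf direction)
  have hClaimB : ∀ a : ℝ, (∀ᶠ s in l, a ≤ g s) → ∀ ε : ℝ, 0 < ε → ∀ᶠ r in l, a - ε ≤ f r := by
    intro a ha ε hε
    set D : ℝ := |a - ε/2| + 1 with hD
    have hDpos : 0 < D := by positivity
    have hclose : ∀ᶠ s in l, 1 - (ε/2) / D < c s :=
      aux_tendsto_c.eventually (eventually_gt_nhds (by
        have : 0 < (ε/2)/D := by positivity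
        linarith))
    have H : ∀ᶠ s in l, a - ε ≤ f (s/5) := by
      filter_upwards [hKey (ε/2) (by positivity), ha, hEc, hclose] with s h1 h2 h3 h4
      refine le_trans ?_ h1
      have htlb : a - ε/2 ≤ g s - ε/2 := by linarith
      obtain ⟨h31, h32⟩ := h3
      rcases le_or_gt (g s - ε/2) 0 with hcase | hcase
      · nlinarith [mul_nonneg (sub_nonneg.2 h32) (neg_nonneg.2 hcase)]
      · rcases le_or_gt (a - ε/2) 0 with hcase2 | hcase2
        · nlinarith [mul_pos h31 hcase]
        · have h5 : c s * (a - ε/2) ≤ c s * (g s - ε/2) :=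
            mul_le_mul_of_nonneg_left htlb h31.le
          have h6 : (1 - c s) * (a - ε/2) ≤ (1 - c s) * D := by
            apply mul_le_mul_of_nonneg_left _ (by linarith [h32])
            rw [hD]
            have : a - ε/2 ≤ |a - ε/2| := le_abs_self _
            linarith
          have h7 : (1 - c s) * D < ε/2 := by
            have h4' : 1 - c s < (ε/2)/D := by linarith
            calc (1 - c s) * D < ((ε/2)/D) * D := by
                  apply mul_lt_mul_of_pos_right h4' hDpos
              _ = ε/2 := div_mul_cancel₀ _ hDpos.ne'
          nlinarith
    have := aux_tendsto_mul5.eventually H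
    filter_upwards [this] with r h
    rwa [show 5*r/5 = r by ring] at h
  -- Claim B' (limsup direction)
  have hClaimB' : ∀ a : ℝ, (∀ᶠ r in l, f r ≤ a) → ∀ ε : ℝ, 0 < ε → ∀ᶠ s in l, g s ≤ a + ε := by
    intro a ha ε hε
    have ha5 : ∀ᶠ s in l, f (s/5) ≤ a := aux_tendsto_div5.eventually ha
    set D : ℝ := |a| + 1 with hD
    have hDpos : 0 < D := by positivity
    have hclose : ∀ᶠ s in l, 1 - (ε/4) / D < c s ∧ 1/2 < c s := by
      apply Filter.Eventually.and
      · exact aux_tendsto_c.eventually (eventually_gt_nhds (by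
          have : 0 < (ε/4)/D := by positivity
          linarith))
      · exact aux_tendsto_c.eventually (eventually_gt_nhds (by norm_num))
    filter_upwards [hKey (ε/2) (by positivity), ha5, hEc, hclose] with s h1 h2 h3 h4
    -- c s * (g s - ε/2) ≤ f (s/5) ≤ a
    have h5 : c s * (g s - ε/2) ≤ a := le_trans h1 h2
    have h6 : g s - ε/2 ≤ a / c s := by
      rw [le_div_iff₀ h3.1]
      calc (g s - ε/2) * c s = c s * (g s - ε/2) := mul_comm _ _
        _ ≤ a := h5
    have h7 : a / c s ≤ a + ε/2 := by
      rcases le_or_gt a 0 with hcase | hcase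
      · have : a / c s ≤ a := by
          rw [div_le_iff₀ h3.1]
          nlinarith [h3.2]
        linarith
      · rw [div_le_iff₀ h3.1]
        have habs : a ≤ D := by rw [hD]; have := le_abs_self a; linarith
        have h8 : (1 - c s) * D < ε/4 := by
          have h4' : 1 - c s < (ε/4)/D := by linarith [h4.1]
          calc (1 - c s) * D < ((ε/4)/D) * D := mul_lt_mul_of_pos_right h4' hDpos
            _ = ε/4 := div_mul_cancel₀ _ hDpos.ne'
        have h9 : (1 - c s) * a ≤ (1 - c s) * D :=
          mul_le_mul_of_nonneg_left habs (by linarith [h3.2])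
        nlinarith [h4.2]
    linarith
  -- Now conclude. liminf:
  constructor
  · rw [liminf_eq, liminf_eq]
    set S : Set ℝ := {a | ∀ᶠ r in l, a ≤ f r} with hS
    set SA : Set ℝ := {a | ∀ᶠ r in l, a ≤ g r} with hSA
    have hSsub : S ⊆ SA := by
      intro a ha
      filter_upwards [ha, hE1] with r h1 h2
      linarith
    have hBA : ∀ a ∈ SA, ∀ ε : ℝ, 0 < ε → a - ε ∈ S := fun a ha ε hε => hClaimB a ha ε hε
    have hS0 : (-1:ℝ) ∈ S := by
      filter_upwards [hE2] with r h
      exact h.1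
    by_cases hbdd : BddAbove SA
    · apply le_antisymm
      · exact csSup_le_csSup hbdd ⟨-1, hS0⟩ hSsub
      · apply csSup_le ⟨-1, hSsub hS0⟩
        intro a ha
        have : ∀ ε : ℝ, 0 < ε → a - ε ≤ sSup S := fun ε hε =>
          le_csSup (hbdd.mono hSsub) (hBA a ha ε hε)
        exact le_of_forall_sub_le fun ε hε => this ε hε
    · have hbddS : ¬ BddAbove S := by
        intro ⟨b, hb⟩
        apply hbdd
        refine ⟨b + 1, fun a ha => ?_⟩
        have := hb (hBA a ha 1 one_pos)
        linarith
      rw [csSup_of_not_bddAbove hbdd, csSup_of_not_bddAbove hbddS]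
  · rw [limsup_eq, limsup_eq]
    set T : Set ℝ := {a | ∀ᶠ r in l, f r ≤ a} with hT
    set TA : Set ℝ := {a | ∀ᶠ r in l, g r ≤ a} with hTA
    have hTsub : TA ⊆ T := by
      intro a ha
      filter_upwards [ha, hE1] with r h1 h2
      linarith
    have hBA' : ∀ a ∈ T, ∀ ε : ℝ, 0 < ε → a + ε ∈ TA := fun a ha ε hε => hClaimB' a ha ε hε
    have hTlow : ∀ a ∈ T, (-1:ℝ) ≤ a := by
      intro a ha
      obtain ⟨r, h1, h2⟩ := (hE2.and ha).exists
      linarith [h1.1]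
    by_cases hne : T.Nonempty
    · obtain ⟨a₀, ha₀⟩ := hne
      have hTAne : TA.Nonempty := ⟨a₀ + 1, hBA' a₀ ha₀ 1 one_pos⟩
      have hTbdd : BddBelow T := ⟨-1, fun a ha => hTlow a ha⟩
      have hTAbdd : BddBelow TA := hTbdd.mono hTsub
      apply le_antisymm
      · exact csInf_le_csInf hTbdd hTAne hTsub
      · apply le_csInf ⟨a₀, ha₀⟩
        intro a ha
        have : ∀ ε : ℝ, 0 < ε → sInf TA ≤ a + ε := fun ε hε =>
          csInf_le hTAbdd (hBA' a ha ε hε)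
        exact le_of_forall_pos_le_add fun ε hε => this ε hε
    · have hTAe : TA = ∅ := by
        rw [← Set.not_nonempty_iff_eq_empty]
        intro ⟨a, ha⟩
        exact hne ⟨a, hTsub ha⟩
      rw [Set.not_nonempty_iff_eq_empty] at hne
      rw [hne, hTAe]

theorem localDim_restrict {X : Type*}
    [MetricSpace X] [CompleteSpace X] [SecondCountableTopology X]
    [MeasurableSpace X] [BorelSpace X]
    (μ : Measure X) [IsLocallyFiniteMeasure μ] [μ.Regular]
    (A : Set X) (hA : 0 < μ A) :
    ∀ᵐ x ∂μ.restrict A,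
      lowerLocalDim μ x = lowerLocalDim (μ.restrict A) x ∧
      upperLocalDim μ x = upperLocalDim (μ.restrict A) x := by
  -- countable cover by finite-measure open sets
  choose V hxV hVopen hVfin using fun x : X => μ.exists_isOpen_measure_lt_top x
  obtain ⟨s, hsc, hsU⟩ := TopologicalSpace.countable_cover_nhds
    (fun x : X => (hVopen x).mem_nhds (hxV x))
  have hgood : ∀ᵐ x ∂μ.restrict A, ∀ n : ℕ, ∀ᶠ r in 𝓝[>] (0:ℝ),
      ENNReal.ofReal ((5*r) ^ ((n:ℝ)+1)⁻¹) * μ (closedBall x r)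
        ≤ μ (closedBall x (5*r) ∩ A) := by
    rw [ae_all_iff]
    intro n
    rw [ae_iff]
    have hεn : 0 < ((n:ℝ)+1)⁻¹ := by positivity
    apply measure_mono_null (t := ⋃ y ∈ s, {x | x ∈ V y ∧ ∃ᶠ r in 𝓝[>] (0:ℝ),
      μ (closedBall x (5*r) ∩ A) < ENNReal.ofReal ((5*r) ^ ((n:ℝ)+1)⁻¹) * μ (closedBall x r)})
    · intro x hx
      simp only [mem_setOf_eq] at hx
      have hx' : ∃ᶠ r in 𝓝[>] (0:ℝ), μ (closedBall x (5*r) ∩ A)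
          < ENNReal.ofReal ((5*r) ^ ((n:ℝ)+1)⁻¹) * μ (closedBall x r) := by
        rw [Filter.not_eventually] at hx
        exact hx.mono fun r hr => not_le.1 hr
      obtain ⟨y, hy, hxy⟩ : ∃ y ∈ s, x ∈ V y := by
        have hxU : x ∈ ⋃ y ∈ s, V y := hsU ▸ mem_univ x
        simpa using hxU
      exact mem_biUnion hy ⟨hxy, hx'⟩
    · refine (measure_biUnion_null_iff hsc).2 fun y _ => ?_
      exact aux_bad_null μ A (V y) (hVopen y) (hVfin y).ne hεn
  have hsupp := aux_ae_closedBall_pos (μ.restrict A)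
  filter_upwards [hgood, hsupp] with x hx2 hx1
  -- pointwise application of the analytic lemma
  have hFG : ∀ r : ℝ, μ (closedBall x r ∩ A) ≤ μ (closedBall x r) :=
    fun r => measure_mono inter_subset_left
  have hmono : ∀ ⦃r t : ℝ⦄, r ≤ t → μ (closedBall x r) ≤ μ (closedBall x t) :=
    fun r t hrt => measure_mono (closedBall_subset_closedBall hrt)
  have hGpos : ∀ r : ℝ, 0 < r → 0 < μ (closedBall x r ∩ A) := by
    intro r hr
    have := hx1 r hr
    rwa [Measure.restrict_apply measurableSet_closedBall] at this
  have hFfin : ∀ᶠ r in 𝓝[>] (0:ℝ), μ (closedBall x r) < ∞ := by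
    obtain ⟨U, hxU, hUo, hUfin⟩ := μ.exists_isOpen_measure_lt_top x
    obtain ⟨t, ht0, htU⟩ : ∃ t : ℝ, 0 < t ∧ closedBall x t ⊆ U := by
      obtain ⟨t, ht, htU⟩ := Metric.mem_nhds_iff.1 (hUo.mem_nhds hxU)
      exact ⟨t/2, by positivity, (closedBall_subset_ball (by linarith)).trans htU⟩
    filter_upwards [eventually_of_mem (Ioo_mem_nhdsGT ht0) (fun _ h => h)] with r hr
    exact lt_of_le_of_lt (measure_mono ((closedBall_subset_closedBall hr.2.le).trans htU)) hUfin
  have hkey : ∀ ε : ℝ, 0 < ε → ∀ᶠ r in 𝓝[>] (0:ℝ),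
      ENNReal.ofReal ((5*r) ^ ε) * μ (closedBall x r) ≤ μ (closedBall x (5*r) ∩ A) := by
    intro ε hε
    obtain ⟨n, hn⟩ := exists_nat_gt (1/ε)
    have hnε : ((n:ℝ)+1)⁻¹ ≤ ε := by
      rw [inv_le_comm₀ (by positivity) hε]
      have h1 : 1/ε ≤ (n:ℝ) := hn.le
      rw [one_div] at h1
      linarith
    filter_upwards [hx2 n,
      eventually_of_mem (Ioo_mem_nhdsGT (by norm_num : (0:ℝ) < 1/5)) (fun _ h => h)]
      with r hr hrs
    refine le_trans ?_ hr
    apply mul_le_mul_left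
    apply ENNReal.ofReal_le_ofReal
    exact Real.rpow_le_rpow_of_exponent_ge (by linarith [hrs.1]) (by linarith [hrs.2]) hnε
  have hmain := aux_analytic hFG hmono hGpos hFfin hkey
  constructor
  · rw [lowerLocalDim, lowerLocalDim]
    simp only [Measure.restrict_apply measurableSet_closedBall]
    exact hmain.1
  · rw [upperLocalDim, upperLocalDim]
    simp only [Measure.restrict_apply measurableSet_closedBall]
    exact hmain.2
end
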